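/- arXiv:2409.20172 — 5 statements merged into one kernel-verified Lean document; each statement's English description precedes it below -/
import Mathlib

section
/- Let H be a hypergraph, let A, B ⊆ V(H), and let x : V(H) → [0,1] be a fractional (A,B)-separator in H. For each v ∈ V(H) let d_v ∈ [0,∞] be the infimum over all paths P in H from a vertex of A to v of ∑_{w ∈ V(P)} x(w) (d_v = ∞ if no such path exists). Then for every r ∈ [0,1], the set S_r = {v ∈ V(H) : x(v) > 0 and d_v − x(v) ≤ r ≤ d_v} is an (A,B)-separator in H and S_r ⊆ supp(x). -/
open Finset
open scoped ENNReal

/-- A hypergraph: a finite vertex set, a finite set of nonempty hyperedges covering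
all vertices. -/
structure Hypergraph' (α : Type*) where
  V : Finset α
  E : Finset (Finset α)
  edge_sub : ∀ e ∈ E, e ⊆ V
  edge_nonempty : ∀ e ∈ E, e.Nonempty
  no_isolated : ∀ v ∈ V, ∃ e ∈ E, v ∈ e

/-- Degeneracy of a graph restricted to a finite vertex set `W`: the least `d` such that
every nonempty subset has a vertex with at most `d` neighbours inside the subset. -/
noncomputable def degeneracyOn {β : Type*} (G : SimpleGraph β) (W : Finset β) : ℕ :=
  sInf {d : ℕ | ∀ W' ⊆ W, W'.Nonempty → ∃ v ∈ W', ((W' : Set β) ∩ G.neighborSet v).ncard ≤ d}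

namespace Hypergraph'

variable {α : Type*}

/-- The primal (Gaifman) graph of a hypergraph. -/
def primal (H : Hypergraph' α) : SimpleGraph α where
  Adj u v := u ≠ v ∧ ∃ e ∈ H.E, u ∈ e ∧ v ∈ e
  symm := by
    constructor
    rintro u v ⟨hne, e, he, hu, hv⟩
    exact ⟨hne.symm, e, he, hv, hu⟩
  loopless := by
    constructor
    rintro u ⟨hne, -⟩
    exact hne rfl

/-- `S` is an `(A,B)`-separator in `H`: every path of the primal graph from a vertex
of `A` to a vertex of `B` meets `S`. -/
def IsSeparator (H : Hypergraph' α) (A B S : Finset α) : Prop :=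
  ∀ a ∈ A, ∀ b ∈ B, ∀ p : H.primal.Walk a b, p.IsPath → ∃ v ∈ p.support, v ∈ S

/-- `x` is a fractional `(A,B)`-separator in `H`. -/
def IsFracSeparator [DecidableEq α] (H : Hypergraph' α) (A B : Finset α) (x : α → ℝ) : Prop :=
  ∀ a ∈ A, ∀ b ∈ B, ∀ p : H.primal.Walk a b, p.IsPath →
    1 ≤ ∑ w ∈ p.support.toFinset, x w

/-- Fractional edge cover number of a weight function `x` on vertices. -/
noncomputable def fracCover [DecidableEq α] (H : Hypergraph' α) (x : α → ℝ) : ℝ :=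
  sInf {c : ℝ | ∃ y : Finset α → ℝ, (∀ e, 0 ≤ y e ∧ y e ≤ 1) ∧
    (∀ v ∈ H.V, x v ≤ ∑ e ∈ H.E, if v ∈ e then y e else 0) ∧
    c = ∑ e ∈ H.E, y e}

/-- Fractional edge cover number `ρ*_H(S)` of a vertex set. -/
noncomputable def fracCoverSet [DecidableEq α] (H : Hypergraph' α) (S : Finset α) : ℝ :=
  H.fracCover (fun v => if v ∈ S then 1 else 0)

/-- Fractional `E`-edge cover number of `x` (`∞` if no fractional `E`-edge cover exists). -/
noncomputable def fracCoverE [DecidableEq α] (H : Hypergraph' α) (E : Finset (Finset α))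
    (x : α → ℝ) : ℝ≥0∞ :=
  sInf {c : ℝ≥0∞ | ∃ y : Finset α → ℝ, (∀ e, 0 ≤ y e ∧ y e ≤ 1) ∧
    (∀ v ∈ H.V, x v ≤ ∑ e ∈ E, if v ∈ e then y e else 0) ∧
    c = ENNReal.ofReal (∑ e ∈ E, y e)}

/-- Fractional `E`-edge cover number `ρ*_{H,E}(S)` of a vertex set. -/
noncomputable def fracCoverESet [DecidableEq α] (H : Hypergraph' α) (E : Finset (Finset α))
    (S : Finset α) : ℝ≥0∞ :=
  H.fracCoverE E (fun v => if v ∈ S then 1 else 0)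

/-- Integral edge cover number `ρ_H(S)`. -/
noncomputable def intCover [DecidableEq α] (H : Hypergraph' α) (S : Finset α) : ℕ :=
  sInf {n : ℕ | ∃ F ⊆ H.E, S ⊆ F.biUnion id ∧ F.card = n}

/-- Independence number `α_H(R)`: maximum size of a subset of `R` such that no
hyperedge contains two of its vertices. -/
noncomputable def indepNum [DecidableEq α] (H : Hypergraph' α) (R : Finset α) : ℕ :=
  sSup {n : ℕ | ∃ I ⊆ R, (∀ e ∈ H.E, (I ∩ e).card ≤ 1) ∧ I.card = n}

/-- Maximum intersection size `η_H` of two distinct hyperedges. -/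
noncomputable def eta [DecidableEq α] (H : Hypergraph' α) : ℕ :=
  sSup {n : ℕ | ∃ e₁ ∈ H.E, ∃ e₂ ∈ H.E, e₁ ≠ e₂ ∧ n = (e₁ ∩ e₂).card}

/-- The (bipartite) incidence graph of a hypergraph. -/
def incidence (H : Hypergraph' α) : SimpleGraph (α ⊕ Finset α) where
  Adj p q :=
    (∃ v e, p = Sum.inl v ∧ q = Sum.inr e ∧ e ∈ H.E ∧ v ∈ e) ∨
    (∃ v e, p = Sum.inr e ∧ q = Sum.inl v ∧ e ∈ H.E ∧ v ∈ e)
  symm := by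
    constructor
    rintro p q (⟨v, e, rfl, rfl, he, hv⟩ | ⟨v, e, rfl, rfl, he, hv⟩)
    · exact Or.inr ⟨v, e, rfl, rfl, he, hv⟩
    · exact Or.inl ⟨v, e, rfl, rfl, he, hv⟩
  loopless := by
    constructor
    rintro p (⟨v, e, rfl, h, -, -⟩ | ⟨v, e, rfl, h, -, -⟩) <;> exact absurd h (by simp)

/-- `μ_H`: degeneracy of the incidence graph of `H`. -/
noncomputable def mu [DecidableEq α] (H : Hypergraph' α) : ℕ :=
  degeneracyOn H.incidence (H.V.image Sum.inl ∪ H.E.image Sum.inr)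

/-- `γ(P) = ∑_{e ∈ E(H) : e ∩ P ≠ ∅} γ(e)`. -/
noncomputable def edgeWeight [DecidableEq α] (H : Hypergraph' α) (γ : Finset α → ℝ)
    (P : Finset α) : ℝ :=
  ∑ e ∈ H.E, if (e ∩ P).Nonempty then γ e else 0

/-- `u` can reach `v` by a walk of the primal graph avoiding `S`. -/
def ReachOutside (H : Hypergraph' α) (S : Finset α) (u v : α) : Prop :=
  ∃ p : H.primal.Walk u v, ∀ w ∈ p.support, w ∉ S

/-- The connected component of `v` in the primal graph of `H` after deleting `S`. -/
noncomputable def comp (H : Hypergraph' α) (S : Finset α) (v : α) : Finset α := by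
  classical exact H.V.filter (fun u => H.ReachOutside S v u)

/-- `S` is a `(γ,φ)`-balanced separator in `H`. -/
def IsGammaBalSep [DecidableEq α] (H : Hypergraph' α) (γ : Finset α → ℝ) (φ : ℝ)
    (S : Finset α) : Prop :=
  ∀ v ∈ H.V, v ∉ S → H.edgeWeight γ (H.comp S v) ≤ φ * H.edgeWeight γ H.V

/-- `S` is a `(Z,φ)`-balanced separator in `H`. -/
def IsZBalSep [DecidableEq α] (H : Hypergraph' α) (Z : Finset α) (φ : ℝ)
    (S : Finset α) : Prop :=
  ∀ v ∈ H.V, v ∉ S →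
    H.fracCoverSet (H.comp S v ∩ Z) ≤ φ * H.fracCoverSet Z

/-- `dist*_{H,x}(u,v)`: the minimum of `1` and the minimum total `x`-weight of a path
from `u` to `v` in the primal graph. -/
noncomputable def dist1 [DecidableEq α] (H : Hypergraph' α) (x : α → ℝ) (u v : α) : ℝ :=
  sInf ({1} ∪ {c : ℝ | ∃ p : H.primal.Walk u v, p.IsPath ∧ c = ∑ w ∈ p.support.toFinset, x w})

/-- `dist*_{H,x}(e,e') = min_{u ∈ e, v ∈ e'} dist*_{H,x}(u,v)`. -/
noncomputable def distE [DecidableEq α] (H : Hypergraph' α) (x : α → ℝ)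
    (e e' : Finset α) : ℝ :=
  sInf {c : ℝ | ∃ u ∈ e, ∃ v ∈ e', c = H.dist1 x u v}

/-- `x` is a fractional `(γ,φ)`-balanced separator in `H`. -/
def IsFracGammaBalSep [DecidableEq α] (H : Hypergraph' α) (γ : Finset α → ℝ) (φ : ℝ)
    (x : α → ℝ) : Prop :=
  ∀ e ∈ H.E, (1 - φ) * (∑ e' ∈ H.E, γ e') ≤ ∑ e' ∈ H.E, H.distE x e e' * γ e'

/-- The induced subhypergraph `H[Q]` for `Q ⊆ V(H)`. -/
def induce [DecidableEq α] (H : Hypergraph' α) (Q : Finset α) (hQ : Q ⊆ H.V) :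
    Hypergraph' α where
  V := Q
  E := (H.E.image (fun e => e ∩ Q)).filter (fun e => e.Nonempty)
  edge_sub := by
    intro e he
    simp only [mem_filter, mem_image] at he
    obtain ⟨⟨e', -, rfl⟩, -⟩ := he
    exact inter_subset_right
  edge_nonempty := by
    intro e he
    exact (mem_filter.mp he).2
  no_isolated := by
    intro v hv
    obtain ⟨e, he, hve⟩ := H.no_isolated v (hQ hv)
    exact ⟨e ∩ Q, mem_filter.mpr ⟨mem_image.mpr ⟨e, he, rfl⟩,
      ⟨v, mem_inter.mpr ⟨hve, hv⟩⟩⟩, mem_inter.mpr ⟨hve, hv⟩⟩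

/-- The ball `B^Q_c(r)` of radius `r` around `c` in `H[Q]` with respect to `x`. -/
noncomputable def ball [DecidableEq α] (H : Hypergraph' α) (x : α → ℝ) (Q : Finset α)
    (hQ : Q ⊆ H.V) (c : α) (r : ℝ) : Finset α := by
  classical exact Q.filter (fun v => (H.induce Q hQ).dist1 x c v ≤ r)

end Hypergraph'

/-- A tree decomposition of a hypergraph. -/
structure TreeDecomp {α : Type*} (H : Hypergraph' α) where
  ι : Type
  fintype : Fintype ι
  T : SimpleGraph ι
  isTree : T.IsTree
  bag : ι → Finset α
  bag_sub : ∀ t, bag t ⊆ H.V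
  bag_conn : ∀ v ∈ H.V, (SimpleGraph.induce {t | v ∈ bag t} T).Connected
  edge_bag : ∀ e ∈ H.E, ∃ t, e ⊆ bag t
section Aux

open SimpleGraph

lemma Walk.isPath_concat' {β : Type*} {G : SimpleGraph β} {u v w : β}
    {p : G.Walk u v} (hp : p.IsPath) (h : G.Adj v w) (hw : w ∉ p.support) :
    (p.concat h).IsPath := by
  rw [← SimpleGraph.Walk.isPath_reverse_iff, SimpleGraph.Walk.reverse_concat]
  exact SimpleGraph.Walk.IsPath.cons (hp.reverse) (by
    rwa [SimpleGraph.Walk.support_reverse, List.mem_reverse])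

/-- Key induction: walk from a vertex satisfying the invariant to a vertex of `B`
must meet `S`. -/
lemma level_set_aux {α : Type*} [DecidableEq α] (H : Hypergraph' α)
    (B S : Finset α) (x : α → ℝ) (d : α → ℝ≥0∞) (r : ℝ)
    (hx0 : ∀ v, 0 ≤ x v)
    (key : ∀ a c, H.primal.Adj a c → d c - ENNReal.ofReal (x c) ≤ d a)
    (hdB : ∀ b ∈ B, ENNReal.ofReal 1 ≤ d b)
    (hr1 : r ≤ 1)
    (hS : ∀ v, v ∈ H.V → 0 < x v → d v - ENNReal.ofReal (x v) ≤ ENNReal.ofReal r →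
      ENNReal.ofReal r ≤ d v → v ∈ S) :
    ∀ a b (p : H.primal.Walk a b), a ∈ H.V → b ∈ B →
      (d a - ENNReal.ofReal (x a) < ENNReal.ofReal r ∨
        (ENNReal.ofReal r = 0 ∧ d a ≤ ENNReal.ofReal (x a))) →
      ∃ v ∈ p.support, v ∈ S := by
  intro a b p
  induction p with
  | @nil a =>
    intro haV hbB hinv
    refine ⟨a, by simp, ?_⟩
    have h1 : ENNReal.ofReal r ≤ d a := by
      refine le_trans ?_ (hdB a hbB)
      exact ENNReal.ofReal_le_ofReal hr1
    rcases hinv with hlt | ⟨hr, hle⟩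
    · have hxa : 0 < x a := by
        rcases lt_or_ge 0 (x a) with h | h
        · exact h
        · exfalso
          have : x a = 0 := le_antisymm h (hx0 a)
          rw [this, ENNReal.ofReal_zero, tsub_zero] at hlt
          exact absurd h1 (not_le.mpr hlt)
      exact hS a haV hxa hlt.le h1
    · have h1' : ENNReal.ofReal 1 ≤ ENNReal.ofReal (x a) := le_trans (hdB a hbB) hle
      have hxa : (1 : ℝ) ≤ x a := by
        rwa [ENNReal.ofReal_le_ofReal_iff (hx0 a)] at h1'
      exact hS a haV (lt_of_lt_of_le one_pos hxa)
        (le_trans (tsub_le_tsub_right hle _) (by simp)) h1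
  | @cons u c w h q ih =>
    intro haV hbB hinv
    have hcV : c ∈ H.V := by
      obtain ⟨-, e, he, -, hce⟩ := h
      exact H.edge_sub e he hce
    rcases hinv with hlt | ⟨hr, hle⟩
    · by_cases hra : ENNReal.ofReal r ≤ d u
      · refine ⟨u, by simp, ?_⟩
        have hxa : 0 < x u := by
          rcases lt_or_ge 0 (x u) with h' | h'
          · exact h'
          · exfalso
            have : x u = 0 := le_antisymm h' (hx0 u)
            rw [this, ENNReal.ofReal_zero, tsub_zero] at hlt
            exact absurd hra (not_le.mpr hlt)
        exact hS u haV hxa hlt.le hra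
      · push_neg at hra
        obtain ⟨v, hv, hvS⟩ := ih hcV hbB (Or.inl (lt_of_le_of_lt (key u c h) hra))
        exact ⟨v, by simp [hv], hvS⟩
    · by_cases hxa : 0 < x u
      · refine ⟨u, by simp, ?_⟩
        exact hS u haV hxa (le_trans (tsub_le_tsub_right hle _) (by simp)) (hr ▸ zero_le)
      · have hxu : x u = 0 := le_antisymm (not_lt.mp hxa) (hx0 u)
        have hd0 : d u = 0 := by
          rw [hxu, ENNReal.ofReal_zero] at hle
          exact le_antisymm hle zero_le
        have hcle : d c ≤ ENNReal.ofReal (x c) := by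
          have := key u c h
          rw [hd0, tsub_le_iff_right, zero_add] at this
          exact this
        obtain ⟨v, hv, hvS⟩ := ih hcV hbB (Or.inr ⟨hr, hcle⟩)
        exact ⟨v, by simp [hv], hvS⟩

end Aux

/-- For every `r ∈ [0,1]`, the level set
`S_r = {v : x(v) > 0, d_v − x(v) ≤ r ≤ d_v}` of a fractional `(A,B)`-separator `x`
is an `(A,B)`-separator contained in `supp(x)`. -/
theorem level_set_is_separator {α : Type*} [DecidableEq α] (H : Hypergraph' α)
    (A B : Finset α) (hA : A ⊆ H.V) (hB : B ⊆ H.V)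
    (x : α → ℝ) (hx01 : ∀ v, 0 ≤ x v ∧ x v ≤ 1) (hxV : ∀ v ∉ H.V, x v = 0)
    (hsep : H.IsFracSeparator A B x)
    (d : α → ℝ≥0∞)
    (hd : ∀ v, d v = sInf {c : ℝ≥0∞ | ∃ a ∈ A, ∃ p : H.primal.Walk a v, p.IsPath ∧
      c = ENNReal.ofReal (∑ w ∈ p.support.toFinset, x w)})
    (r : ℝ) (hr0 : 0 ≤ r) (hr1 : r ≤ 1)
    (S : Finset α)
    (hSdef : ∀ v, v ∈ S ↔ v ∈ H.V ∧ 0 < x v ∧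
      d v - ENNReal.ofReal (x v) ≤ ENNReal.ofReal r ∧ ENNReal.ofReal r ≤ d v) :
    H.IsSeparator A B S ∧ ∀ v ∈ S, v ∈ H.V ∧ 0 < x v := by
  have hx0 : ∀ v, 0 ≤ x v := fun v => (hx01 v).1
  -- key lemma: moving along an edge
  have key : ∀ a c, H.primal.Adj a c → d c - ENNReal.ofReal (x c) ≤ d a := by
    intro a c hadj
    rw [hd a]
    refine le_sInf ?_
    rintro s ⟨a', ha', Q, hQ, rfl⟩
    by_cases hmem : c ∈ Q.support
    · have hdc : d c ≤ ENNReal.ofReal (∑ w ∈ (Q.takeUntil c hmem).support.toFinset, x w) := by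
        rw [hd c]
        exact sInf_le ⟨a', ha', Q.takeUntil c hmem, hQ.takeUntil hmem, rfl⟩
      refine le_trans tsub_le_self (le_trans hdc (ENNReal.ofReal_le_ofReal ?_))
      refine Finset.sum_le_sum_of_subset_of_nonneg ?_ (fun w _ _ => hx0 w)
      intro w hw
      rw [List.mem_toFinset] at hw ⊢
      exact Q.support_takeUntil_subset hmem hw
    · have hpath : (Q.concat hadj).IsPath := Walk.isPath_concat' hQ hadj hmem
      have hdc : d c ≤ ENNReal.ofReal (∑ w ∈ (Q.concat hadj).support.toFinset, x w) := by
        rw [hd c]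
        exact sInf_le ⟨a', ha', Q.concat hadj, hpath, rfl⟩
      have hsupp : (Q.concat hadj).support.toFinset = insert c Q.support.toFinset := by
        ext w
        simp [SimpleGraph.Walk.support_concat, List.concat_eq_append, or_comm]
      have hsum : ∑ w ∈ (Q.concat hadj).support.toFinset, x w
          = x c + ∑ w ∈ Q.support.toFinset, x w := by
        rw [hsupp, Finset.sum_insert (by simpa using hmem)]
      rw [tsub_le_iff_right]
      calc d c ≤ ENNReal.ofReal (x c + ∑ w ∈ Q.support.toFinset, x w) := by rwa [hsum] at hdc
        _ = ENNReal.ofReal (∑ w ∈ Q.support.toFinset, x w) + ENNReal.ofReal (x c) := by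
            rw [ENNReal.ofReal_add (hx0 c) (Finset.sum_nonneg fun w _ => hx0 w), add_comm]
  have hdA : ∀ a ∈ A, d a ≤ ENNReal.ofReal (x a) := by
    intro a ha
    rw [hd a]
    refine sInf_le ⟨a, ha, SimpleGraph.Walk.nil, SimpleGraph.Walk.IsPath.nil, ?_⟩
    simp
  have hdB : ∀ b ∈ B, ENNReal.ofReal 1 ≤ d b := by
    intro b hb
    rw [hd b]
    refine le_sInf ?_
    rintro s ⟨a', ha', Q, hQ, rfl⟩
    exact ENNReal.ofReal_le_ofReal (hsep a' ha' b hb Q hQ)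
  constructor
  · intro a ha b hb p hp
    refine level_set_aux H B S x d r hx0 key hdB hr1
      (fun v hV hx hle hge => (hSdef v).mpr ⟨hV, hx, hle, hge⟩) a b p (hA ha) hb ?_
    by_cases hr : ENNReal.ofReal r = 0
    · exact Or.inr ⟨hr, hdA a ha⟩
    · have h0 : d a - ENNReal.ofReal (x a) = 0 := tsub_eq_zero_of_le (hdA a ha)
      exact Or.inl (h0 ▸ pos_iff_ne_zero.mpr hr)
  · intro v hv
    obtain ⟨h1, h2, -⟩ := (hSdef v).mp hv
    exact ⟨h1, h2⟩
end

section
/- Let H be a hypergraph, let A, B ⊆ V(H), let E ⊆ E(H), let x : V(H) → [0,1] be a fractional (A,B)-separator in H with supp(x) = R, and let ε be a real with 0 < ε < 1/(2·α_H(R)). Then there exists a fractional (A,B)-separator x̃ : V(H) → [0,1] in H with supp(x̃) ⊆ R such that x̃(v) ∈ {0} ∪ [ε,1] for all v ∈ V(H), and ρ*_{H,E}(x̃) ≤ ρ*_{H,E}(x)/(1 − 2·ε·α_H(R)). -/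
open Finset
open scoped ENNReal

def WalkInd {α : Type*} {G : SimpleGraph α} : ∀ {a b : α}, G.Walk a b → Prop
  | _, _, .nil => True
  | a, _, .cons (v := c) _ q => (∀ w ∈ q.support, G.Adj a w → w = c) ∧ WalkInd q

lemma walkInd_shorter {α : Type*} [DecidableEq α] {G : SimpleGraph α} :
    ∀ {a b : α} (q : G.Walk a b), q.IsPath → ¬ WalkInd q →
      ∃ w : G.Walk a b, w.length < q.length ∧ ∀ v ∈ w.support, v ∈ q.support := by
  intro a b q
  induction q with
  | nil => intro _ h; exact absurd trivial h
  | cons h q' ih =>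
    rename_i a c b
    intro hp hni
    rw [WalkInd] at hni
    by_cases hq' : WalkInd q'
    · have hcl : ¬ ∀ w ∈ q'.support, G.Adj a w → w = c := fun hall => hni ⟨hall, hq'⟩
      push_neg at hcl
      obtain ⟨w, hws, hadj, hwc⟩ := hcl
      refine ⟨SimpleGraph.Walk.cons hadj (q'.dropUntil w hws), ?_, ?_⟩
      · have hspec := congrArg SimpleGraph.Walk.length (q'.take_spec hws)
        rw [SimpleGraph.Walk.length_append] at hspec
        have htk : (q'.takeUntil w hws).length ≠ 0 := fun h0 =>
          hwc (SimpleGraph.Walk.eq_of_length_eq_zero h0).symm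
        simp only [SimpleGraph.Walk.length_cons]
        omega
      · intro v hv
        rw [SimpleGraph.Walk.support_cons, List.mem_cons] at hv
        rw [SimpleGraph.Walk.support_cons, List.mem_cons]
        rcases hv with rfl | hv
        · exact Or.inl rfl
        · exact Or.inr (SimpleGraph.Walk.support_dropUntil_subset _ hws hv)
    · obtain ⟨w', hl, hs⟩ := ih hp.of_cons hq'
      refine ⟨SimpleGraph.Walk.cons h w', ?_, ?_⟩
      · simpa using Nat.succ_lt_succ hl
      · intro v hv
        rw [SimpleGraph.Walk.support_cons, List.mem_cons] at hv
        rw [SimpleGraph.Walk.support_cons, List.mem_cons]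
        exact hv.imp id (hs v)

lemma walkInd_extract {α : Type*} [DecidableEq α] {G : SimpleGraph α} :
    ∀ (n : ℕ) {a b : α} (p : G.Walk a b), p.length ≤ n →
      ∃ q : G.Walk a b, q.IsPath ∧ WalkInd q ∧ ∀ v ∈ q.support, v ∈ p.support := by
  intro n
  induction n with
  | zero =>
    intro a b p hp
    by_cases hi : WalkInd p.bypass
    · exact ⟨p.bypass, p.bypass_isPath, hi, fun v hv => p.support_bypass_subset hv⟩
    · obtain ⟨w, hl, -⟩ := walkInd_shorter p.bypass p.bypass_isPath hi
      have := p.length_bypass_le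
      omega
  | succ n ih =>
    intro a b p hp
    by_cases hi : WalkInd p.bypass
    · exact ⟨p.bypass, p.bypass_isPath, hi, fun v hv => p.support_bypass_subset hv⟩
    · obtain ⟨w, hl, hs⟩ := walkInd_shorter p.bypass p.bypass_isPath hi
      have hble := p.length_bypass_le
      obtain ⟨q, h1, h2, h3⟩ := ih w (by omega)
      exact ⟨q, h1, h2, fun v hv => p.support_bypass_subset (hs v (h3 v hv))⟩

lemma walkInd_decomp {α : Type*} [DecidableEq α] {G : SimpleGraph α} :
    ∀ {a b : α} (q : G.Walk a b), q.IsPath → WalkInd q →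
      ∃ I0 I1 : Finset α, q.support.toFinset = I0 ∪ I1 ∧ a ∉ I1 ∧
        (∀ u ∈ I0, ∀ v ∈ I0, u ≠ v → ¬ G.Adj u v) ∧
        (∀ u ∈ I1, ∀ v ∈ I1, u ≠ v → ¬ G.Adj u v) := by
  intro a b q
  induction q with
  | nil =>
    rename_i u
    intro _ _
    refine ⟨{u}, ∅, by simp, by simp, ?_, by simp⟩
    intro w hw v hv hwv
    rw [Finset.mem_singleton] at hw hv
    exact absurd (hw.trans hv.symm) hwv
  | cons h q' ih =>
    rename_i a c b
    intro hp hind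
    rw [WalkInd] at hind
    obtain ⟨I0', I1', hu, hc, h0, h1⟩ := ih hp.of_cons hind.2
    have hpa : a ∉ q'.support := ((SimpleGraph.Walk.cons_isPath_iff h q').mp hp).2
    have hmem : ∀ v ∈ I1', v ∈ q'.support := fun v hv => by
      have : v ∈ q'.support.toFinset := hu ▸ Finset.mem_union_right _ hv
      exact List.mem_toFinset.mp this
    have hmem0 : ∀ v ∈ I0', v ∈ q'.support := fun v hv => by
      have : v ∈ q'.support.toFinset := hu ▸ Finset.mem_union_left _ hv
      exact List.mem_toFinset.mp this
    refine ⟨insert a I1', I0', ?_, fun ha => hpa (hmem0 a ha), ?_, h0⟩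
    · rw [SimpleGraph.Walk.support_cons, List.toFinset_cons, hu]
      ext v
      simp only [Finset.mem_insert, Finset.mem_union]
      tauto
    · intro u hu' v hv' hne hadj
      rcases Finset.mem_insert.mp hu' with hua | hu1
      · rcases Finset.mem_insert.mp hv' with hva | hv1
        · exact hne (hua.trans hva.symm)
        · subst hua
          exact hc (hind.1 v (hmem v hv1) hadj ▸ hv1)
      · rcases Finset.mem_insert.mp hv' with hva | hv1
        · subst hva
          exact hc (hind.1 u (hmem u hu1) hadj.symm ▸ hu1)
        · exact h1 u hu1 v hv1 hne hadj

lemma min_one_sum {β : Type*} {s : Finset β} {f : β → ℝ} (hf : ∀ e ∈ s, 0 ≤ f e) :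
    min 1 (∑ e ∈ s, f e) ≤ ∑ e ∈ s, min 1 (f e) := by
  by_cases h : ∃ e ∈ s, 1 ≤ f e
  · obtain ⟨e, he, h1⟩ := h
    calc min 1 (∑ e ∈ s, f e) ≤ 1 := min_le_left _ _
      _ = min 1 (f e) := (min_eq_left h1).symm
      _ ≤ ∑ e ∈ s, min 1 (f e) :=
        Finset.single_le_sum (fun i hi => le_min zero_le_one (hf i hi)) he
  · push_neg at h
    calc min 1 (∑ e ∈ s, f e) ≤ ∑ e ∈ s, f e := min_le_right _ _
      _ = ∑ e ∈ s, min 1 (f e) :=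
        Finset.sum_congr rfl fun e he => (min_eq_right (h e he).le).symm

lemma hyper_walk_support_mem {α : Type*} (H : Hypergraph' α) :
    ∀ {a b : α} (p : H.primal.Walk a b), a ∈ H.V → ∀ v ∈ p.support, v ∈ H.V := by
  intro a b p
  induction p with
  | nil =>
    intro ha v hv
    rw [SimpleGraph.Walk.support_nil, List.mem_singleton] at hv
    exact hv ▸ ha
  | cons h q ih =>
    intro ha v hv
    rw [SimpleGraph.Walk.support_cons, List.mem_cons] at hv
    rcases hv with rfl | hv
    · exact ha
    · obtain ⟨-, e, he, -, hce⟩ := h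
      exact ih (H.edge_sub e he hce) v hv

lemma indep_card_le {α : Type*} [DecidableEq α] (H : Hypergraph' α) {R I : Finset α}
    (hIR : I ⊆ R)
    (hind : ∀ u ∈ I, ∀ v ∈ I, u ≠ v → ¬ H.primal.Adj u v) : I.card ≤ H.indepNum R := by
  apply le_csSup
  · refine ⟨R.card, ?_⟩
    rintro n ⟨J, hJR, -, hcard⟩
    exact hcard ▸ Finset.card_le_card hJR
  · refine ⟨I, hIR, ?_, rfl⟩
    intro e he
    rw [Finset.card_le_one]
    intro u hu v hv
    by_contra hne
    obtain ⟨huI, hue⟩ := Finset.mem_inter.mp hu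
    obtain ⟨hvI, hve⟩ := Finset.mem_inter.mp hv
    exact hind u huI v hvI hne ⟨hne, e, he, hue, hve⟩

/-- A fractional `(A,B)`-separator can be rounded so that all nonzero
values are at least `ε`, increasing the fractional `E`-edge cover number by a factor of
at most `1/(1 − 2·ε·α_H(R))`. -/
theorem frac_sep_min_value {α : Type*} [DecidableEq α] (H : Hypergraph' α)
    (A B R : Finset α) (hA : A ⊆ H.V) (hB : B ⊆ H.V)
    (E : Finset (Finset α)) (hE : E ⊆ H.E)
    (x : α → ℝ) (hx01 : ∀ v, 0 ≤ x v ∧ x v ≤ 1) (hxV : ∀ v ∉ H.V, x v = 0)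
    (hsep : H.IsFracSeparator A B x)
    (hR : ∀ v, v ∈ R ↔ v ∈ H.V ∧ 0 < x v)
    (ε : ℝ) (hε0 : 0 < ε) (hε : ε < 1 / (2 * (H.indepNum R : ℝ))) :
    ∃ x' : α → ℝ, (∀ v, 0 ≤ x' v ∧ x' v ≤ 1) ∧ (∀ v ∉ H.V, x' v = 0) ∧
      H.IsFracSeparator A B x' ∧
      (∀ v, 0 < x' v → v ∈ R) ∧
      (∀ v ∈ H.V, x' v = 0 ∨ ε ≤ x' v) ∧
      H.fracCoverE E x' ≤
        H.fracCoverE E x / ENNReal.ofReal (1 - 2 * ε * (H.indepNum R : ℝ)) := by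
  have hα : 1 ≤ H.indepNum R := by
    rcases Nat.eq_zero_or_pos (H.indepNum R) with h0 | h0
    · rw [h0] at hε; norm_num at hε; linarith
    · exact h0
  set αR : ℝ := (H.indepNum R : ℝ) with hαR
  have hαpos : (1 : ℝ) ≤ αR := by rw [hαR]; exact_mod_cast hα
  set δ : ℝ := 2 * ε * αR with hδ
  have h2 : (0 : ℝ) < 2 * αR := by linarith
  have hεα : ε * (2 * αR) < 1 := (lt_div_iff₀ h2).mp hε
  have hδ1 : δ < 1 := by rw [hδ]; linarith [hεα]
  have hδ0 : 0 ≤ δ := by rw [hδ]; positivity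
  have hδpos : 0 < 1 - δ := by linarith
  have hε1 : ε < 1 := by nlinarith [hεα, hαpos, hε0]
  set x' : α → ℝ := fun v => if ε ≤ x v then min 1 (x v / (1 - δ)) else 0 with hx'
  have hx'01 : ∀ v, 0 ≤ x' v ∧ x' v ≤ 1 := by
    intro v
    simp only [hx']
    split_ifs with hv
    · exact ⟨le_min zero_le_one (div_nonneg (hx01 v).1 hδpos.le), min_le_left _ _⟩
    · exact ⟨le_refl 0, zero_le_one⟩
  have hx'le : ∀ v, x' v ≤ min 1 (x v / (1 - δ)) := by
    intro v
    simp only [hx']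
    split_ifs with hv
    · exact le_refl _
    · exact le_min zero_le_one (div_nonneg (hx01 v).1 hδpos.le)
  refine ⟨x', hx'01, ?_, ?_, ?_, ?_, ?_⟩
  · intro v hv
    simp only [hx', hxV v hv, if_neg (not_le.mpr hε0)]
  · -- separator property
    intro a ha b hb p hp
    obtain ⟨q, hqpath, hqind, hqsupp⟩ := walkInd_extract p.length p le_rfl
    have hqV : ∀ v ∈ q.support, v ∈ H.V := fun v hv =>
      hyper_walk_support_mem H q (hA ha) v hv
    set T : Finset α := q.support.toFinset with hT
    have hT1 : 1 ≤ ∑ w ∈ T, x w := hsep a ha b hb q hqpath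
    obtain ⟨I0, I1, hU, -, h0, h1⟩ := walkInd_decomp q hqpath hqind
    set S : Finset α := (T.filter (fun v => ¬ ε ≤ x v)).filter (fun v => 0 < x v) with hS
    have hSsub : ∀ v ∈ S, v ∈ R := by
      intro v hv
      obtain ⟨hv1, hvpos⟩ := Finset.mem_filter.mp hv
      obtain ⟨hvT, -⟩ := Finset.mem_filter.mp hv1
      exact (hR v).mpr ⟨hqV v (List.mem_toFinset.mp hvT), hvpos⟩
    have hST : S ⊆ T := fun v hv =>
      Finset.filter_subset _ _ (Finset.filter_subset _ _ hv)
    have hScard : (S.card : ℝ) ≤ 2 * αR := by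
      have hsub : S ⊆ I0 ∪ I1 := fun v hv => hU ▸ (hST hv)
      have hcard : S.card ≤ (S ∩ I0).card + (S ∩ I1).card := by
        have hs : S ⊆ (S ∩ I0) ∪ (S ∩ I1) := by
          intro v hv
          rcases Finset.mem_union.mp (hsub hv) with h' | h'
          · exact Finset.mem_union_left _ (Finset.mem_inter.mpr ⟨hv, h'⟩)
          · exact Finset.mem_union_right _ (Finset.mem_inter.mpr ⟨hv, h'⟩)
        exact le_trans (Finset.card_le_card hs) (Finset.card_union_le _ _)
      have hc0 : (S ∩ I0).card ≤ H.indepNum R :=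
        indep_card_le H (fun v hv => hSsub v (Finset.mem_inter.mp hv).1)
          (fun u hu v hv hne hadj =>
            h0 u (Finset.mem_inter.mp hu).2 v (Finset.mem_inter.mp hv).2 hne hadj)
      have hc1 : (S ∩ I1).card ≤ H.indepNum R :=
        indep_card_le H (fun v hv => hSsub v (Finset.mem_inter.mp hv).1)
          (fun u hu v hv hne hadj =>
            h1 u (Finset.mem_inter.mp hu).2 v (Finset.mem_inter.mp hv).2 hne hadj)
      have hn : S.card ≤ 2 * H.indepNum R := by omega
      calc (S.card : ℝ) ≤ ((2 * H.indepNum R : ℕ) : ℝ) := by exact_mod_cast hn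
        _ = 2 * αR := by rw [hαR]; push_cast; ring
    have hmain : 1 ≤ ∑ w ∈ T, x' w := by
      by_cases hbig : ∃ w ∈ T, 1 ≤ x' w
      · obtain ⟨w, hw, h1w⟩ := hbig
        calc (1:ℝ) ≤ x' w := h1w
          _ ≤ ∑ w ∈ T, x' w :=
            Finset.single_le_sum (fun i _ => (hx'01 i).1) hw
      · push_neg at hbig
        have hsum : ∑ w ∈ T, x' w = (∑ w ∈ T.filter (fun v => ε ≤ x v), x w) / (1 - δ) := by
          rw [← Finset.sum_filter_of_ne (p := fun v => ε ≤ x v)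
            (fun w _ hne => by
              by_contra hc
              exact hne (by simp only [hx', if_neg hc]))]
          rw [Finset.sum_div]
          refine Finset.sum_congr rfl ?_
          intro w hw
          obtain ⟨hwT, hwε⟩ := Finset.mem_filter.mp hw
          have hlt : x' w < 1 := hbig w hwT
          simp only [hx', if_pos hwε] at hlt ⊢
          rcases le_total (x w / (1 - δ)) 1 with hle | hle
          · exact min_eq_right hle
          · exact absurd (min_eq_left hle ▸ hlt) (lt_irrefl 1)
        have hsmall : ∑ w ∈ T.filter (fun v => ¬ ε ≤ x v), x w ≤ δ := by
          have step1 : ∑ w ∈ T.filter (fun v => ¬ ε ≤ x v), x w ≤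
              ∑ w ∈ T.filter (fun v => ¬ ε ≤ x v), (if 0 < x w then ε else 0) := by
            refine Finset.sum_le_sum ?_
            intro w hw
            obtain ⟨-, hwε⟩ := Finset.mem_filter.mp hw
            split_ifs with hpos
            · exact (not_le.mp hwε).le
            · exact le_of_not_gt fun hlt => hpos hlt
          have step2 : ∑ w ∈ T.filter (fun v => ¬ ε ≤ x v), (if 0 < x w then ε else 0)
              = S.card * ε := by
            rw [← Finset.sum_filter, ← hS, Finset.sum_const, nsmul_eq_mul]
          have step3 : (S.card : ℝ) * ε ≤ δ := by
            rw [hδ]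
            calc (S.card : ℝ) * ε ≤ (2 * αR) * ε :=
              mul_le_mul_of_nonneg_right hScard hε0.le
              _ = 2 * ε * αR := by ring
          linarith
        have hsplit := Finset.sum_filter_add_sum_filter_not T (fun v => ε ≤ x v) x
        have hBg : 1 - δ ≤ ∑ w ∈ T.filter (fun v => ε ≤ x v), x w := by linarith
        rw [hsum]
        exact (one_le_div hδpos).mpr hBg
    calc (1:ℝ) ≤ ∑ w ∈ T, x' w := hmain
      _ ≤ ∑ w ∈ p.support.toFinset, x' w :=
        Finset.sum_le_sum_of_subset_of_nonneg
          (fun v hv => List.mem_toFinset.mpr (hqsupp v (List.mem_toFinset.mp hv)))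
          (fun i _ _ => (hx'01 i).1)
  · -- support in R
    intro v hv
    by_cases hc : ε ≤ x v
    · refine (hR v).mpr ⟨?_, lt_of_lt_of_le hε0 hc⟩
      by_contra hV
      rw [hxV v hV] at hc
      exact absurd (lt_of_lt_of_le hε0 hc) (lt_irrefl 0)
    · simp only [hx', if_neg hc] at hv
      exact absurd hv (lt_irrefl 0)
  · -- threshold
    intro v hv
    by_cases hc : ε ≤ x v
    · right
      simp only [hx', if_pos hc]
      refine le_min hε1.le (le_trans hc ?_)
      rw [le_div_iff₀ hδpos]
      nlinarith [(hx01 v).1]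
    · left
      simp only [hx', if_neg hc]
  · -- cover bound
    have hk0 : ENNReal.ofReal (1 - δ) ≠ 0 := by
      rw [Ne, ENNReal.ofReal_eq_zero, not_le]
      exact hδpos
    have hkt : ENNReal.ofReal (1 - δ) ≠ ⊤ := ENNReal.ofReal_ne_top
    rw [Hypergraph'.fracCoverE, Hypergraph'.fracCoverE,
      ENNReal.le_div_iff_mul_le (Or.inl hk0) (Or.inl hkt)]
    refine le_sInf ?_
    rintro c ⟨y, hy01, hycov, rfl⟩
    refine ENNReal.mul_le_of_le_div ?_
    calc sInf {c : ℝ≥0∞ | ∃ y : Finset α → ℝ, (∀ e, 0 ≤ y e ∧ y e ≤ 1) ∧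
          (∀ v ∈ H.V, x' v ≤ ∑ e ∈ E, if v ∈ e then y e else 0) ∧
          c = ENNReal.ofReal (∑ e ∈ E, y e)}
        ≤ ENNReal.ofReal (∑ e ∈ E, min 1 (y e / (1 - δ))) := by
          refine sInf_le ⟨fun e => min 1 (y e / (1 - δ)), ?_, ?_, rfl⟩
          · intro e
            exact ⟨le_min zero_le_one (div_nonneg (hy01 e).1 hδpos.le), min_le_left _ _⟩
          · intro v hv
            calc x' v ≤ min 1 (x v / (1 - δ)) := hx'le v
              _ ≤ min 1 ((∑ e ∈ E, if v ∈ e then y e else 0) / (1 - δ)) :=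
                min_le_min le_rfl ((div_le_div_iff_of_pos_right hδpos).mpr (hycov v hv))
              _ ≤ ∑ e ∈ E, min 1 ((if v ∈ e then y e else 0) / (1 - δ)) := by
                have hmo := min_one_sum (s := E)
                  (f := fun e => (if v ∈ e then y e else 0) / (1 - δ))
                  (fun e _ => by
                    refine div_nonneg ?_ hδpos.le
                    split_ifs with h
                    · exact (hy01 e).1
                    · exact le_refl 0)
                rwa [← Finset.sum_div] at hmo
              _ = ∑ e ∈ E, (if v ∈ e then min 1 (y e / (1 - δ)) else 0) := by
                refine Finset.sum_congr rfl ?_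
                intro e he
                split_ifs with h
                · rfl
                · rw [zero_div]
                  exact min_eq_right zero_le_one
      _ ≤ ENNReal.ofReal ((∑ e ∈ E, y e) / (1 - δ)) := by
          refine ENNReal.ofReal_le_ofReal ?_
          rw [Finset.sum_div]
          exact Finset.sum_le_sum fun e _ => min_le_right _ _
      _ = ENNReal.ofReal (∑ e ∈ E, y e) / ENNReal.ofReal (1 - δ) :=
          ENNReal.ofReal_div_of_pos hδpos
end

section
/- Let H be a hypergraph, let Z ⊆ V(H), let φ ∈ (0,1), and let γ : E(H) → [0,1] be a fractional edge cover of Z with ∑_{e ∈ E(H)} γ(e) = ρ*_H(Z). Then every (γ,φ)-balanced separator in H is also a (Z,φ)-balanced separator in H. -/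
open Finset
open scoped ENNReal

/-- If `γ` is a minimum-cost fractional edge cover of `Z`, then every
`(γ,φ)`-balanced separator is also a `(Z,φ)`-balanced separator. -/
theorem gammaBalSep_is_ZBalSep {α : Type*} [DecidableEq α] (H : Hypergraph' α)
    (Z : Finset α) (hZ : Z ⊆ H.V) (φ : ℝ) (hφ0 : 0 < φ) (hφ1 : φ < 1)
    (γ : Finset α → ℝ) (hγ01 : ∀ e, 0 ≤ γ e ∧ γ e ≤ 1)
    (hγcov : ∀ v ∈ Z, 1 ≤ ∑ e ∈ H.E, if v ∈ e then γ e else 0)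
    (hγcost : ∑ e ∈ H.E, γ e = H.fracCoverSet Z)
    (S : Finset α) (hS : H.IsGammaBalSep γ φ S) :
    H.IsZBalSep Z φ S := by
  intro v hv hvS
  have hcomp := hS v hv hvS
  set C := H.comp S v with hC
  have hEW : H.edgeWeight γ H.V = ∑ e ∈ H.E, γ e := by
    unfold Hypergraph'.edgeWeight
    refine Finset.sum_congr rfl fun e he => ?_
    have hne : (e ∩ H.V).Nonempty := by
      obtain ⟨w, hw⟩ := H.edge_nonempty e he
      exact ⟨w, Finset.mem_inter.mpr ⟨hw, H.edge_sub e he hw⟩⟩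
    simp [hne]
  have hbdd : BddBelow {c : ℝ | ∃ y : Finset α → ℝ, (∀ e, 0 ≤ y e ∧ y e ≤ 1) ∧
      (∀ w ∈ H.V, (if w ∈ C ∩ Z then (1:ℝ) else 0) ≤ ∑ e ∈ H.E, if w ∈ e then y e else 0) ∧
      c = ∑ e ∈ H.E, y e} := by
    refine ⟨0, ?_⟩
    rintro c ⟨y, hy, -, rfl⟩
    exact Finset.sum_nonneg fun e _ => (hy e).1
  have hmem : H.edgeWeight γ C ∈ {c : ℝ | ∃ y : Finset α → ℝ, (∀ e, 0 ≤ y e ∧ y e ≤ 1) ∧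
      (∀ w ∈ H.V, (if w ∈ C ∩ Z then (1:ℝ) else 0) ≤ ∑ e ∈ H.E, if w ∈ e then y e else 0) ∧
      c = ∑ e ∈ H.E, y e} := by
    refine ⟨fun e => if (e ∩ C).Nonempty then γ e else 0, ?_, ?_, rfl⟩
    · intro e
      dsimp only
      split
      · exact hγ01 e
      · exact ⟨le_refl 0, zero_le_one⟩
    · intro w hw
      by_cases hwCZ : w ∈ C ∩ Z
      · simp only [hwCZ, if_pos]
        calc (1:ℝ) ≤ ∑ e ∈ H.E, if w ∈ e then γ e else 0 :=
              hγcov w (Finset.mem_inter.mp hwCZ).2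
          _ = ∑ e ∈ H.E, if w ∈ e then (if (e ∩ C).Nonempty then γ e else 0) else 0 := by
              refine Finset.sum_congr rfl fun e _ => ?_
              by_cases hwe : w ∈ e
              · have : (e ∩ C).Nonempty :=
                  ⟨w, Finset.mem_inter.mpr ⟨hwe, (Finset.mem_inter.mp hwCZ).1⟩⟩
                simp [hwe, this]
              · simp [hwe]
      · simp only [hwCZ, if_neg, not_false_iff]
        refine Finset.sum_nonneg fun e _ => ?_
        split
        · split
          · exact (hγ01 e).1
          · exact le_refl 0
        · exact le_refl 0
  calc H.fracCoverSet (C ∩ Z) ≤ H.edgeWeight γ C := csInf_le hbdd hmem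
    _ ≤ φ * H.edgeWeight γ H.V := hcomp
    _ = φ * H.fracCoverSet Z := by rw [hEW, hγcost]
end

section
/- Let H be a hypergraph, let φ ∈ (0,1), let γ : E(H) → [0,1], and let x : V(H) → [0,1] be a fractional (γ,φ)-balanced separator in H. Then for every Q ⊆ V(H), every c ∈ Q, and every r ∈ [0,1), γ(B^Q_c(r)) ≤ (φ/(1−r))·γ(V(H)). -/
open Finset
open scoped ENNReal

section Aux

open SimpleGraph

namespace Hypergraph'

variable {α : Type*} [DecidableEq α]

lemma dist1_bddBelow (H : Hypergraph' α) {x : α → ℝ} (hx : ∀ v, 0 ≤ x v) (u v : α) :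
    BddBelow ({1} ∪ {c : ℝ | ∃ p : H.primal.Walk u v, p.IsPath ∧
      c = ∑ w ∈ p.support.toFinset, x w}) := by
  refine ⟨0, ?_⟩
  rintro c (rfl | ⟨p, -, rfl⟩)
  · exact zero_le_one
  · exact Finset.sum_nonneg fun w _ => hx w

lemma dist1_nonneg (H : Hypergraph' α) {x : α → ℝ} (hx : ∀ v, 0 ≤ x v) (u v : α) :
    0 ≤ H.dist1 x u v := by
  refine le_csInf ⟨1, Or.inl rfl⟩ ?_
  rintro c (rfl | ⟨p, -, rfl⟩)
  · exact zero_le_one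
  · exact Finset.sum_nonneg fun w _ => hx w

lemma dist1_le_one (H : Hypergraph' α) {x : α → ℝ} (hx : ∀ v, 0 ≤ x v) (u v : α) :
    H.dist1 x u v ≤ 1 :=
  csInf_le (H.dist1_bddBelow hx u v) (Or.inl rfl)

lemma induce_primal_le (H : Hypergraph' α) (Q : Finset α) (hQ : Q ⊆ H.V) :
    (H.induce Q hQ).primal ≤ H.primal := by
  rintro a b ⟨hne, e, he, ha, hb⟩
  simp only [induce, Finset.mem_filter, Finset.mem_image] at he
  obtain ⟨⟨e', he', rfl⟩, -⟩ := he
  exact ⟨hne, e', he', (Finset.mem_inter.mp ha).1, (Finset.mem_inter.mp hb).1⟩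

lemma dist1_le_induce (H : Hypergraph' α) {x : α → ℝ} (hx : ∀ v, 0 ≤ x v)
    (Q : Finset α) (hQ : Q ⊆ H.V) (u v : α) :
    H.dist1 x u v ≤ (H.induce Q hQ).dist1 x u v := by
  refine csInf_le_csInf (H.dist1_bddBelow hx u v) ⟨1, Or.inl rfl⟩ ?_
  rintro c (rfl | ⟨p, hp, rfl⟩)
  · exact Or.inl rfl
  · refine Or.inr ⟨p.mapLe (H.induce_primal_le Q hQ), hp.mapLe _, ?_⟩
    congr 1
    simp only [Walk.mapLe, Walk.support_map, Hom.ofLE]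
    congr 1
    exact (List.map_id' p.support).symm

lemma distE_bddBelow (H : Hypergraph' α) {x : α → ℝ} (hx : ∀ v, 0 ≤ x v) (e e' : Finset α) :
    BddBelow {c : ℝ | ∃ u ∈ e, ∃ v ∈ e', c = H.dist1 x u v} := by
  refine ⟨0, ?_⟩
  rintro c ⟨u, -, v, -, rfl⟩
  exact H.dist1_nonneg hx u v

lemma distE_le_dist1 (H : Hypergraph' α) {x : α → ℝ} (hx : ∀ v, 0 ≤ x v)
    {e e' : Finset α} {u v : α} (hu : u ∈ e) (hv : v ∈ e') :
    H.distE x e e' ≤ H.dist1 x u v :=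
  csInf_le (H.distE_bddBelow hx e e') ⟨u, hu, v, hv, rfl⟩

end Hypergraph'

end Aux

/-- Balls of radius `r < 1` around any center have small `γ`-volume:
`γ(B^Q_c(r)) ≤ (φ/(1−r))·γ(V(H))`. -/
theorem ball_volume_small {α : Type*} [DecidableEq α] (H : Hypergraph' α)
    (φ : ℝ) (hφ0 : 0 < φ) (hφ1 : φ < 1)
    (γ : Finset α → ℝ) (hγ01 : ∀ e, 0 ≤ γ e ∧ γ e ≤ 1)
    (x : α → ℝ) (hx01 : ∀ v, 0 ≤ x v ∧ x v ≤ 1) (hxV : ∀ v ∉ H.V, x v = 0)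
    (hbal : H.IsFracGammaBalSep γ φ x)
    (Q : Finset α) (hQ : Q ⊆ H.V) (c : α) (hc : c ∈ Q)
    (r : ℝ) (hr0 : 0 ≤ r) (hr1 : r < 1) :
    H.edgeWeight γ (H.ball x Q hQ c r) ≤ (φ / (1 - r)) * H.edgeWeight γ H.V := by
  classical
  have hx := fun v => (hx01 v).1
  obtain ⟨e₀, he₀, hce₀⟩ := H.no_isolated c (hQ hc)
  set T := ∑ e' ∈ H.E, γ e' with hTdef
  have hT : H.edgeWeight γ H.V = T := by
    refine Finset.sum_congr rfl fun e he => ?_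
    rw [if_pos]
    obtain ⟨v, hv⟩ := H.edge_nonempty e he
    exact ⟨v, Finset.mem_inter.mpr ⟨hv, H.edge_sub e he hv⟩⟩
  have key : ∀ e ∈ H.E,
      (1 - r) * (if (e ∩ H.ball x Q hQ c r).Nonempty then γ e else 0) ≤
        (1 - H.distE x e₀ e) * γ e := by
    intro e he
    by_cases hB : (e ∩ H.ball x Q hQ c r).Nonempty
    · rw [if_pos hB]
      obtain ⟨v, hv⟩ := hB
      rw [Finset.mem_inter] at hv
      obtain ⟨hve, hvB⟩ := hv
      rw [Hypergraph'.ball, Finset.mem_filter] at hvB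
      have h1 : H.dist1 x c v ≤ r :=
        (H.dist1_le_induce hx Q hQ c v).trans hvB.2
      have h2 : H.distE x e₀ e ≤ r := (H.distE_le_dist1 hx hce₀ hve).trans h1
      exact mul_le_mul_of_nonneg_right (by linarith) (hγ01 e).1
    · rw [if_neg hB, mul_zero]
      obtain ⟨v, hv⟩ := H.edge_nonempty e he
      have h2 : H.distE x e₀ e ≤ 1 :=
        (H.distE_le_dist1 hx hce₀ hv).trans (H.dist1_le_one hx c v)
      exact mul_nonneg (by linarith) (hγ01 e).1
  have sum_key : (1 - r) * H.edgeWeight γ (H.ball x Q hQ c r) ≤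
      ∑ e ∈ H.E, (1 - H.distE x e₀ e) * γ e := by
    rw [Hypergraph'.edgeWeight, Finset.mul_sum]
    exact Finset.sum_le_sum key
  have hsplit : ∑ e ∈ H.E, (1 - H.distE x e₀ e) * γ e =
      T - ∑ e ∈ H.E, H.distE x e₀ e * γ e := by
    rw [hTdef, ← Finset.sum_sub_distrib]
    exact Finset.sum_congr rfl fun e _ => by ring
  have hbal' := hbal e₀ he₀
  have hfin : (1 - r) * H.edgeWeight γ (H.ball x Q hQ c r) ≤ φ * T := by
    rw [hsplit] at sum_key
    linarith
  rw [hT, div_mul_eq_mul_div, le_div_iff₀ (by linarith : (0:ℝ) < 1 - r)]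
  linarith
end

section
/- Let H be a hypergraph, let k ≥ 1 be a real number, and let i, j be positive integers. Suppose ρ*_H(V(H)) ≤ k and H satisfies the i-j intersection property, i.e., every family of i pairwise distinct hyperedges of H has at most j vertices in its common intersection. Then ρ_H(V(H)) ≤ 10·k·i·log₂(2kj). -/
open Finset
open scoped ENNReal

section aux
variable {β : Type*} [DecidableEq β]

lemma sum_powersetCard_succ (E : Finset β) (z : β → ℝ) (m : ℕ) :
    ((m+1 : ℕ) : ℝ) * ∑ F ∈ E.powersetCard (m+1), ∏ e ∈ F, z e
      = ∑ F ∈ E.powersetCard m, (∏ e ∈ F, z e) * ∑ e ∈ E \ F, z e := by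
  have lhs : ((m+1:ℕ):ℝ) * ∑ F ∈ E.powersetCard (m+1), ∏ e ∈ F, z e
      = ∑ F ∈ E.powersetCard (m+1), ∑ e ∈ F, (∏ a ∈ F.erase e, z a) * z e := by
    rw [Finset.mul_sum]
    refine Finset.sum_congr rfl ?_
    intro F hF
    rw [Finset.mem_powersetCard] at hF
    have h1 : ∀ e ∈ F, (∏ a ∈ F.erase e, z a) * z e = ∏ a ∈ F, z a := by
      intro e he
      rw [mul_comm, Finset.mul_prod_erase F z he]
    rw [Finset.sum_congr rfl h1, Finset.sum_const, hF.2, nsmul_eq_mul]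
  have rhs : ∑ F ∈ E.powersetCard m, (∏ e ∈ F, z e) * ∑ e ∈ E \ F, z e
      = ∑ F ∈ E.powersetCard m, ∑ e ∈ E \ F, (∏ a ∈ F, z a) * z e := by
    refine Finset.sum_congr rfl ?_
    intro F _
    rw [Finset.mul_sum]
  rw [lhs, rhs, Finset.sum_sigma', Finset.sum_sigma']
  refine Finset.sum_bij' (fun x _ => (⟨x.1.erase x.2, x.2⟩ : Σ _ : Finset β, β))
    (fun x _ => (⟨insert x.2 x.1, x.2⟩ : Σ _ : Finset β, β)) ?_ ?_ ?_ ?_ ?_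
  · rintro ⟨G, e⟩ hx
    simp only [Finset.mem_sigma, Finset.mem_powersetCard] at hx ⊢
    obtain ⟨⟨hGE, hcard⟩, he⟩ := hx
    refine ⟨⟨(Finset.erase_subset _ _).trans hGE, ?_⟩, ?_⟩
    · rw [Finset.card_erase_of_mem he, hcard]; rfl
    · simp [Finset.mem_sdiff, hGE he]
  · rintro ⟨F, e⟩ hx
    simp only [Finset.mem_sigma, Finset.mem_powersetCard, Finset.mem_sdiff] at hx ⊢
    obtain ⟨⟨hFE, hcard⟩, heE, heF⟩ := hx
    refine ⟨⟨Finset.insert_subset heE hFE, ?_⟩, Finset.mem_insert_self _ _⟩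
    rw [Finset.card_insert_of_notMem heF, hcard]
  · rintro ⟨G, e⟩ hx
    simp only [Finset.mem_sigma] at hx
    simp [Finset.insert_erase hx.2]
  · rintro ⟨F, e⟩ hx
    simp only [Finset.mem_sigma, Finset.mem_sdiff] at hx
    simp [Finset.erase_insert hx.2.2]
  · rintro ⟨G, e⟩ hx
    rfl

lemma lower_esymm (E : Finset β) (z : β → ℝ) (θ : ℝ)
    (hz0 : ∀ e ∈ E, 0 ≤ z e) (hzθ : ∀ e ∈ E, z e ≤ θ) :
    ∀ m : ℕ, (∀ ℓ : ℕ, ℓ < m → (ℓ : ℝ) * θ ≤ ∑ e ∈ E, z e) →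
      ∏ ℓ ∈ Finset.range m, ((∑ e ∈ E, z e) - ℓ * θ)
        ≤ Nat.factorial m * ∑ F ∈ E.powersetCard m, ∏ e ∈ F, z e := by
  intro m
  induction m with
  | zero => intro _; simp
  | succ m ih =>
    intro hm
    have hmθ : (m : ℝ) * θ ≤ ∑ e ∈ E, z e := hm m (Nat.lt_succ_self m)
    have hnn : (0:ℝ) ≤ (∑ e ∈ E, z e) - m * θ := by linarith
    have hprodnn : ∀ F ∈ E.powersetCard m, (0:ℝ) ≤ ∏ e ∈ F, z e := by
      intro F hF
      rw [Finset.mem_powersetCard] at hF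
      exact Finset.prod_nonneg fun e he => hz0 e (hF.1 he)
    calc ∏ ℓ ∈ Finset.range (m+1), ((∑ e ∈ E, z e) - ℓ * θ)
        = (∏ ℓ ∈ Finset.range m, ((∑ e ∈ E, z e) - ℓ * θ)) * ((∑ e ∈ E, z e) - m * θ) := by
          rw [Finset.prod_range_succ]
      _ ≤ (Nat.factorial m * ∑ F ∈ E.powersetCard m, ∏ e ∈ F, z e) * ((∑ e ∈ E, z e) - m * θ) := by
          apply mul_le_mul_of_nonneg_right _ hnn
          exact ih (fun ℓ hℓ => hm ℓ (hℓ.trans (Nat.lt_succ_self m)))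
      _ = Nat.factorial m * ∑ F ∈ E.powersetCard m, (∏ e ∈ F, z e) * ((∑ e ∈ E, z e) - m * θ) := by
          rw [mul_assoc, Finset.sum_mul]
      _ ≤ Nat.factorial m * ∑ F ∈ E.powersetCard m, (∏ e ∈ F, z e) * ∑ e ∈ E \ F, z e := by
          apply mul_le_mul_of_nonneg_left _ (by positivity)
          apply Finset.sum_le_sum
          intro F hF
          apply mul_le_mul_of_nonneg_left _ (hprodnn F hF)
          rw [Finset.mem_powersetCard] at hF
          have hsub : ∑ e ∈ F, z e ≤ (m : ℝ) * θ := by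
            calc ∑ e ∈ F, z e ≤ ∑ _e ∈ F, θ :=
                  Finset.sum_le_sum fun e he => hzθ e (hF.1 he)
              _ = F.card * θ := by rw [Finset.sum_const, nsmul_eq_mul]
              _ = m * θ := by rw [hF.2]
          have hsplit : ∑ e ∈ E \ F, z e = (∑ e ∈ E, z e) - ∑ e ∈ F, z e := by
            rw [eq_sub_iff_add_eq, Finset.sum_sdiff_eq_sub hF.1]
            ring
          rw [hsplit]; linarith
      _ = Nat.factorial m * (((m+1:ℕ):ℝ) * ∑ F ∈ E.powersetCard (m+1), ∏ e ∈ F, z e) := by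
          rw [sum_powersetCard_succ]
      _ = Nat.factorial (m+1) * ∑ F ∈ E.powersetCard (m+1), ∏ e ∈ F, z e := by
          rw [Nat.factorial_succ]; push_cast; ring

lemma upper_esymm (E : Finset β) (z : β → ℝ) (hz0 : ∀ e ∈ E, 0 ≤ z e) :
    ∀ m : ℕ, Nat.factorial m * ∑ F ∈ E.powersetCard m, ∏ e ∈ F, z e ≤ (∑ e ∈ E, z e) ^ m := by
  intro m
  induction m with
  | zero => simp
  | succ m ih =>
    have hS0 : (0:ℝ) ≤ ∑ e ∈ E, z e := Finset.sum_nonneg hz0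
    have key : ((m+1:ℕ):ℝ) * ∑ F ∈ E.powersetCard (m+1), ∏ e ∈ F, z e
        ≤ (∑ F ∈ E.powersetCard m, ∏ e ∈ F, z e) * ∑ e ∈ E, z e := by
      rw [sum_powersetCard_succ, Finset.sum_mul]
      apply Finset.sum_le_sum
      intro F hF
      rw [Finset.mem_powersetCard] at hF
      have hprodnn : (0:ℝ) ≤ ∏ e ∈ F, z e :=
        Finset.prod_nonneg fun e he => hz0 e (hF.1 he)
      apply mul_le_mul_of_nonneg_left _ hprodnn
      exact Finset.sum_le_sum_of_subset_of_nonneg (Finset.sdiff_subset) fun e he _ => hz0 e he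
    calc (Nat.factorial (m+1) : ℝ) * ∑ F ∈ E.powersetCard (m+1), ∏ e ∈ F, z e
        = Nat.factorial m * (((m+1:ℕ):ℝ) * ∑ F ∈ E.powersetCard (m+1), ∏ e ∈ F, z e) := by
          rw [Nat.factorial_succ]; push_cast; ring
      _ ≤ Nat.factorial m * ((∑ F ∈ E.powersetCard m, ∏ e ∈ F, z e) * ∑ e ∈ E, z e) :=
          mul_le_mul_of_nonneg_left key (by positivity)
      _ = (Nat.factorial m * ∑ F ∈ E.powersetCard m, ∏ e ∈ F, z e) * ∑ e ∈ E, z e := by ring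
      _ ≤ (∑ e ∈ E, z e) ^ m * ∑ e ∈ E, z e := mul_le_mul_of_nonneg_right ih hS0
      _ = (∑ e ∈ E, z e) ^ (m+1) := by rw [pow_succ]

end aux

lemma greedy_cover {α : Type*} [DecidableEq α] (E : Finset (Finset α)) (y : Finset α → ℝ)
    (K : ℝ) (hy0 : ∀ e ∈ E, 0 ≤ y e) (hS : ∑ e ∈ E, y e ≤ K) :
    ∀ n : ℕ, ∀ U : Finset α, U.card ≤ n →
      (∀ v ∈ U, (1:ℝ) ≤ ∑ e ∈ E, if v ∈ e then y e else 0) →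
      ∃ F ⊆ E, (∀ v ∈ U, ∃ e ∈ F, v ∈ e) ∧ (F.card : ℝ) ≤ K * Real.log U.card + 1 := by
  intro n
  induction n with
  | zero =>
    intro U hU _
    rw [Nat.le_zero, Finset.card_eq_zero] at hU
    subst hU
    exact ⟨∅, Finset.empty_subset _, by simp, by simp⟩
  | succ n ih =>
    intro U hUn hcov
    rcases U.eq_empty_or_nonempty with rfl | hUne
    · exact ⟨∅, Finset.empty_subset _, by simp, by simp⟩
    have hUpos : (0:ℝ) < U.card := by
      exact_mod_cast Finset.card_pos.mpr hUne
    have hU1 : (1:ℝ) ≤ U.card := by exact_mod_cast Finset.card_pos.mpr hUne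
    obtain ⟨v₀, hv₀⟩ := hUne
    have hK1 : (1:ℝ) ≤ K := by
      have h1 := hcov v₀ hv₀
      have h2 : ∑ e ∈ E, (if v₀ ∈ e then y e else 0) ≤ ∑ e ∈ E, y e := by
        apply Finset.sum_le_sum
        intro e he
        split
        · exact le_rfl
        · exact hy0 e he
      linarith
    have hKpos : (0:ℝ) < K := lt_of_lt_of_le one_pos hK1
    have hEne : E.Nonempty := by
      rcases E.eq_empty_or_nonempty with rfl | h
      · have := hcov v₀ hv₀; simp at this; linarith
      · exact h
    obtain ⟨e₀, he₀E, he₀max⟩ := E.exists_max_image (fun e => (U ∩ e).card) hEne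
    have key : (U.card : ℝ) ≤ K * ((U ∩ e₀).card) := by
      have h1 : (U.card : ℝ) ≤ ∑ v ∈ U, ∑ e ∈ E, (if v ∈ e then y e else 0) := by
        calc (U.card : ℝ) = ∑ _v ∈ U, (1:ℝ) := by rw [Finset.sum_const, nsmul_eq_mul, mul_one]
          _ ≤ _ := Finset.sum_le_sum hcov
      have h2 : ∑ v ∈ U, ∑ e ∈ E, (if v ∈ e then y e else 0)
          = ∑ e ∈ E, ((U ∩ e).card : ℝ) * y e := by
        rw [Finset.sum_comm]
        refine Finset.sum_congr rfl ?_
        intro e _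
        rw [← Finset.sum_filter, Finset.sum_const, nsmul_eq_mul, Finset.filter_mem_eq_inter]
      have h3 : ∑ e ∈ E, ((U ∩ e).card : ℝ) * y e ≤ ∑ e ∈ E, ((U ∩ e₀).card : ℝ) * y e := by
        apply Finset.sum_le_sum
        intro e he
        exact mul_le_mul_of_nonneg_right (by exact_mod_cast he₀max e he) (hy0 e he)
      have h4 : ∑ e ∈ E, ((U ∩ e₀).card : ℝ) * y e = ((U ∩ e₀).card : ℝ) * ∑ e ∈ E, y e := by
        rw [Finset.mul_sum]
      have h5 : ((U ∩ e₀).card : ℝ) * ∑ e ∈ E, y e ≤ ((U ∩ e₀).card : ℝ) * K :=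
        mul_le_mul_of_nonneg_left hS (by positivity)
      calc (U.card : ℝ) ≤ ∑ v ∈ U, ∑ e ∈ E, (if v ∈ e then y e else 0) := h1
        _ = ∑ e ∈ E, ((U ∩ e).card : ℝ) * y e := h2
        _ ≤ ∑ e ∈ E, ((U ∩ e₀).card : ℝ) * y e := h3
        _ = ((U ∩ e₀).card : ℝ) * ∑ e ∈ E, y e := h4
        _ ≤ ((U ∩ e₀).card : ℝ) * K := h5
        _ = K * ((U ∩ e₀).card : ℝ) := mul_comm _ _
    have hinterpos : (0:ℝ) < ((U ∩ e₀).card : ℝ) := by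
      by_contra h
      push_neg at h
      have : ((U ∩ e₀).card : ℝ) = 0 := le_antisymm h (by positivity)
      rw [this, mul_zero] at key
      linarith
    set U' := U \ e₀ with hU'def
    have hcards : U'.card + (U ∩ e₀).card = U.card := by
      rw [hU'def]
      exact Finset.card_sdiff_add_card_inter U e₀
    have hinter1 : 1 ≤ (U ∩ e₀).card := by
      by_contra h
      push_neg at h
      interval_cases h' : (U ∩ e₀).card
      · simp [h'] at hinterpos
    have hU'lt : U'.card ≤ n := by omega
    have hcov' : ∀ v ∈ U', (1:ℝ) ≤ ∑ e ∈ E, if v ∈ e then y e else 0 := by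
      intro v hv
      exact hcov v (Finset.sdiff_subset hv)
    obtain ⟨F', hF'E, hF'cov, hF'bd⟩ := ih U' hU'lt hcov'
    by_cases hU'e : U' = ∅
    · refine ⟨{e₀}, by simpa using he₀E, ?_, ?_⟩
      · intro v hv
        refine ⟨e₀, Finset.mem_singleton_self _, ?_⟩
        by_contra hve
        have : v ∈ U' := Finset.mem_sdiff.mpr ⟨hv, hve⟩
        rw [hU'e] at this
        simp at this
      · have : (0:ℝ) ≤ K * Real.log U.card :=
          mul_nonneg (le_of_lt hKpos) (Real.log_nonneg hU1)
        simp only [Finset.card_singleton]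
        push_cast
        linarith
    · refine ⟨insert e₀ F', Finset.insert_subset he₀E hF'E, ?_, ?_⟩
      · intro v hv
        by_cases hve : v ∈ e₀
        · exact ⟨e₀, Finset.mem_insert_self _ _, hve⟩
        · obtain ⟨e, heF, hvee⟩ := hF'cov v (Finset.mem_sdiff.mpr ⟨hv, hve⟩)
          exact ⟨e, Finset.mem_insert_of_mem heF, hvee⟩
      · have hU'pos : (0:ℝ) < U'.card := by
          have : U'.Nonempty := Finset.nonempty_iff_ne_empty.mpr hU'e
          exact_mod_cast Finset.card_pos.mpr this
        have hdivle : (U.card : ℝ) / K ≤ ((U ∩ e₀).card : ℝ) := by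
          rw [div_le_iff₀ hKpos]
          linarith [key]
        have hU'real : (U'.card : ℝ) = (U.card : ℝ) - ((U ∩ e₀).card : ℝ) := by
          have := hcards
          push_cast [← this]
          ring
        have hfrac : (U'.card : ℝ) ≤ (U.card : ℝ) * (1 - 1/K) := by
          have heq : (U.card : ℝ) * (1 - 1/K) = (U.card : ℝ) - (U.card : ℝ)/K := by ring
          rw [heq, hU'real]
          linarith
        have h1K : (0:ℝ) < 1 - 1/K := by
          by_contra h
          push_neg at h
          nlinarith
        have hlog1 : Real.log U'.card ≤ Real.log ((U.card : ℝ) * (1 - 1/K)) :=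
          Real.log_le_log hU'pos hfrac
        have hlogmul : Real.log ((U.card : ℝ) * (1 - 1/K))
            = Real.log U.card + Real.log (1 - 1/K) :=
          Real.log_mul (ne_of_gt hUpos) (ne_of_gt h1K)
        have hlogsmall : Real.log (1 - 1/K) ≤ -(1/K) := by
          have := Real.log_le_sub_one_of_pos h1K
          linarith
        have hm1 : K * Real.log U'.card ≤ K * (Real.log U.card + Real.log (1 - 1/K)) :=
          mul_le_mul_of_nonneg_left (hlog1.trans_eq hlogmul) (le_of_lt hKpos)
        have hm2 : K * Real.log (1 - 1/K) ≤ K * (-(1/K)) :=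
          mul_le_mul_of_nonneg_left hlogsmall (le_of_lt hKpos)
        have hm3 : K * (-(1/K)) = -1 := by
          field_simp
        have hcard : ((insert e₀ F').card : ℝ) ≤ (F'.card : ℝ) + 1 := by
          have := Finset.card_insert_le e₀ F'
          exact_mod_cast this
        have := hF'bd
        nlinarith [hm1, hm2]


set_option maxHeartbeats 1600000 in
/-- Fractional versus integral edge covers under the `i-j` intersection
property: `ρ_H(V(H)) ≤ 10·k·i·log₂(2kj)`. -/
theorem int_cover_from_frac_cover {α : Type*} [DecidableEq α] (H : Hypergraph' α)
    (k : ℝ) (hk : 1 ≤ k) (i j : ℕ) (hi : 0 < i) (hj : 0 < j)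
    (hcov : H.fracCoverSet H.V ≤ k)
    (hint : ∀ F ⊆ H.E, F.card = i →
      (H.V.filter (fun v => ∀ e ∈ F, v ∈ e)).card ≤ j) :
    (H.intCover H.V : ℝ) ≤ 10 * k * (i : ℝ) * Real.logb 2 (2 * k * (j : ℝ)) := by
  classical
  unfold Hypergraph'.fracCoverSet Hypergraph'.fracCover at hcov
  -- extract an almost-optimal fractional cover y
  have hne : Set.Nonempty {c : ℝ | ∃ y : Finset α → ℝ, (∀ e, 0 ≤ y e ∧ y e ≤ 1) ∧
      (∀ v ∈ H.V, (fun v => if v ∈ H.V then (1:ℝ) else 0) v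
        ≤ ∑ e ∈ H.E, if v ∈ e then y e else 0) ∧
      c = ∑ e ∈ H.E, y e} := by
    refine ⟨∑ e ∈ H.E, (1:ℝ), fun _ => 1, fun e => ⟨zero_le_one, le_rfl⟩, ?_, rfl⟩
    intro v hv
    simp only [if_pos hv]
    obtain ⟨e₀, he₀, hv₀⟩ := H.no_isolated v hv
    have h1 : (if v ∈ e₀ then (1:ℝ) else 0) ≤ ∑ e ∈ H.E, if v ∈ e then (1:ℝ) else 0 := by
      apply Finset.single_le_sum (f := fun e => if v ∈ e then (1:ℝ) else 0) _ he₀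
      intro e _
      split <;> norm_num
    rw [if_pos hv₀] at h1
    exact h1
  obtain ⟨c, hc, hck1⟩ := exists_lt_of_csInf_lt hne (lt_of_le_of_lt hcov (lt_add_one k))
  obtain ⟨y, hy01, hycov0, hceq⟩ := hc
  set K : ℝ := k + 1 with hKdef
  have hy0 : ∀ e, (0:ℝ) ≤ y e := fun e => (hy01 e).1
  have hSle : ∑ e ∈ H.E, y e ≤ K := by rw [← hceq]; exact le_of_lt hck1
  have hycov : ∀ v ∈ H.V, (1:ℝ) ≤ ∑ e ∈ H.E, if v ∈ e then y e else 0 := by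
    intro v hv
    have := hycov0 v hv
    simpa [if_pos hv] using this
  have hipos : (0:ℝ) < (i:ℝ) := by exact_mod_cast hi
  have hi1 : (1:ℝ) ≤ (i:ℝ) := by exact_mod_cast hi
  have hj1 : (1:ℝ) ≤ (j:ℝ) := by exact_mod_cast hj
  have hK1 : (1:ℝ) ≤ K := by simp only [hKdef]; linarith
  have hK2k : K ≤ 2*k := by simp only [hKdef]; linarith
  set θ : ℝ := 1/(2*(i:ℝ)) with hθdef
  have hθpos : 0 < θ := by positivity
  set z : Finset α → ℝ := fun e => if y e < θ then y e else 0 with hzdef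
  have hz0 : ∀ e, 0 ≤ z e := by
    intro e; simp only [hzdef]; split
    · exact hy0 e
    · exact le_rfl
  have hzθ : ∀ e, z e ≤ θ := by
    intro e; simp only [hzdef]; split
    · linarith [show y e < θ from by assumption]
    · exact hθpos.le
  have hzy : ∀ e, z e ≤ y e := by
    intro e; simp only [hzdef]; split
    · exact le_rfl
    · exact hy0 e
  set Fbig : Finset (Finset α) := H.E.filter (fun e => θ ≤ y e) with hFbigdef
  have hFbigE : Fbig ⊆ H.E := Finset.filter_subset _ _
  have hFbigcard : (Fbig.card : ℝ) ≤ 2 * K * i := by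
    have h1 : (Fbig.card : ℝ) * θ ≤ ∑ e ∈ Fbig, y e := by
      have := Finset.card_nsmul_le_sum Fbig y θ
        (fun e he => (Finset.mem_filter.mp he).2)
      rw [nsmul_eq_mul] at this
      exact this
    have h2 : ∑ e ∈ Fbig, y e ≤ ∑ e ∈ H.E, y e :=
      Finset.sum_le_sum_of_subset_of_nonneg hFbigE (fun e he _ => hy0 e)
    have h3 : (Fbig.card : ℝ) * θ ≤ K := by linarith
    have h4 : θ * (2*K*(i:ℝ)) = K := by
      simp only [hθdef]; field_simp
    nlinarith [h3, hθpos, show (0:ℝ) ≤ (Fbig.card:ℝ) by positivity]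
  set U : Finset α := H.V \ Fbig.biUnion id with hUdef
  have hUsub : U ⊆ H.V := Finset.sdiff_subset
  have hlight : ∀ v ∈ U, ∀ e ∈ H.E, v ∈ e → y e < θ := by
    intro v hv e he hve
    by_contra h
    push_neg at h
    have heF : e ∈ Fbig := Finset.mem_filter.mpr ⟨he, h⟩
    have : v ∈ Fbig.biUnion id := Finset.mem_biUnion.mpr ⟨e, heF, hve⟩
    exact (Finset.mem_sdiff.mp hv).2 this
  have hSv : ∀ v ∈ U, (1:ℝ) ≤ ∑ e ∈ H.E.filter (fun e => v ∈ e), z e := by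
    intro v hv
    have h1 : ∑ e ∈ H.E.filter (fun e => v ∈ e), z e
        = ∑ e ∈ H.E, if v ∈ e then z e else 0 := Finset.sum_filter (fun e => v ∈ e) z
    have h2 : ∀ e ∈ H.E, (if v ∈ e then z e else 0) = (if v ∈ e then y e else 0) := by
      intro e he
      by_cases hve : v ∈ e
      · simp only [if_pos hve, hzdef, if_pos (hlight v hv e he hve)]
      · simp [hve]
    rw [h1, Finset.sum_congr rfl h2]
    exact hycov v (hUsub hv)
  -- per-vertex lower bound
  have hper : ∀ v ∈ U, ((1:ℝ)/2)^i ≤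
      (Nat.factorial i : ℝ) * ∑ F ∈ (H.E.filter (fun e => v ∈ e)).powersetCard i,
        ∏ e ∈ F, z e := by
    intro v hv
    have hSv1 := hSv v hv
    have hstep : ∀ ℓ : ℕ, ℓ < i → (ℓ:ℝ) * θ ≤ 1/2 := by
      intro ℓ hℓ
      have hℓi : (ℓ:ℝ) + 1 ≤ i := by exact_mod_cast hℓ
      simp only [hθdef]
      rw [mul_one_div, div_le_div_iff₀ (by positivity) two_pos]
      nlinarith
    have h1 : ((1:ℝ)/2)^i ≤ ∏ ℓ ∈ Finset.range i,
        ((∑ e ∈ H.E.filter (fun e => v ∈ e), z e) - ℓ * θ) := by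
      have hp : ∏ _ℓ ∈ Finset.range i, ((1:ℝ)/2) ≤ ∏ ℓ ∈ Finset.range i,
          ((∑ e ∈ H.E.filter (fun e => v ∈ e), z e) - ℓ * θ) := by
        apply Finset.prod_le_prod
        · intro ℓ _; norm_num
        · intro ℓ hℓ
          have := hstep ℓ (Finset.mem_range.mp hℓ)
          linarith
      simpa [Finset.prod_const, Finset.card_range] using hp
    have h2 := lower_esymm (H.E.filter (fun e => v ∈ e)) z θ
      (fun e _ => hz0 e) (fun e _ => hzθ e) i
      (fun ℓ hℓ => by have := hstep ℓ hℓ; linarith)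
    exact h1.trans h2
  -- swap sums
  have hswap : ∑ v ∈ U, ∑ F ∈ (H.E.filter (fun e => v ∈ e)).powersetCard i, ∏ e ∈ F, z e
      = ∑ F ∈ H.E.powersetCard i,
          (((U.filter (fun v => ∀ e ∈ F, v ∈ e)).card : ℝ) * ∏ e ∈ F, z e) := by
    have h1 : ∀ v : α, (H.E.filter (fun e => v ∈ e)).powersetCard i
        = (H.E.powersetCard i).filter (fun F => ∀ e ∈ F, v ∈ e) := by
      intro v
      ext F
      simp only [Finset.mem_powersetCard, Finset.mem_filter]
      constructor
      · rintro ⟨hsub, hcard⟩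
        have hFE : F ⊆ H.E := fun e he => (Finset.mem_filter.mp (hsub he)).1
        have hFv : ∀ e ∈ F, v ∈ e := fun e he => (Finset.mem_filter.mp (hsub he)).2
        exact ⟨⟨hFE, hcard⟩, hFv⟩
      · rintro ⟨⟨hFE, hcard⟩, hFv⟩
        exact ⟨fun e he => Finset.mem_filter.mpr ⟨hFE he, hFv e he⟩, hcard⟩
    calc ∑ v ∈ U, ∑ F ∈ (H.E.filter (fun e => v ∈ e)).powersetCard i, ∏ e ∈ F, z e
        = ∑ v ∈ U, ∑ F ∈ H.E.powersetCard i,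
            (if (∀ e ∈ F, v ∈ e) then ∏ e ∈ F, z e else 0) := by
          refine Finset.sum_congr rfl fun v _ => ?_
          rw [h1 v, Finset.sum_filter]
      _ = ∑ F ∈ H.E.powersetCard i, ∑ v ∈ U,
            (if (∀ e ∈ F, v ∈ e) then ∏ e ∈ F, z e else 0) := Finset.sum_comm
      _ = ∑ F ∈ H.E.powersetCard i,
            (((U.filter (fun v => ∀ e ∈ F, v ∈ e)).card : ℝ) * ∏ e ∈ F, z e) := by
          refine Finset.sum_congr rfl fun F _ => ?_
          rw [← Finset.sum_filter, Finset.sum_const, nsmul_eq_mul]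
  have hprodnn : ∀ F ∈ H.E.powersetCard i, (0:ℝ) ≤ ∏ e ∈ F, z e := by
    intro F _
    exact Finset.prod_nonneg fun e _ => hz0 e
  have hcnt : ∀ F ∈ H.E.powersetCard i,
      ((U.filter (fun v => ∀ e ∈ F, v ∈ e)).card : ℝ) ≤ (j:ℝ) := by
    intro F hF
    rw [Finset.mem_powersetCard] at hF
    have h1 : (U.filter (fun v => ∀ e ∈ F, v ∈ e))
        ⊆ (H.V.filter (fun v => ∀ e ∈ F, v ∈ e)) :=
      Finset.filter_subset_filter _ hUsub
    have h2 := (Finset.card_le_card h1).trans (hint F hF.1 hF.2)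
    exact_mod_cast h2
  -- global bound on U.card
  have hSz : ∑ e ∈ H.E, z e ≤ K :=
    le_trans (Finset.sum_le_sum fun e _ => hzy e) hSle
  have hfinal1 : (U.card : ℝ) * ((1:ℝ)/2)^i ≤ (j:ℝ) * K^i := by
    have c1 : (U.card : ℝ) * ((1:ℝ)/2)^i = ∑ _v ∈ U, ((1:ℝ)/2)^i := by
      rw [Finset.sum_const, nsmul_eq_mul]
    have c2 : ∑ _v ∈ U, ((1:ℝ)/2)^i
        ≤ ∑ v ∈ U, (Nat.factorial i : ℝ) *
            ∑ F ∈ (H.E.filter (fun e => v ∈ e)).powersetCard i, ∏ e ∈ F, z e :=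
      Finset.sum_le_sum hper
    have c3 : ∑ v ∈ U, (Nat.factorial i : ℝ) *
          ∑ F ∈ (H.E.filter (fun e => v ∈ e)).powersetCard i, ∏ e ∈ F, z e
        = (Nat.factorial i : ℝ) * ∑ F ∈ H.E.powersetCard i,
            (((U.filter (fun v => ∀ e ∈ F, v ∈ e)).card : ℝ) * ∏ e ∈ F, z e) := by
      rw [← Finset.mul_sum, hswap]
    have c4 : ∑ F ∈ H.E.powersetCard i,
          (((U.filter (fun v => ∀ e ∈ F, v ∈ e)).card : ℝ) * ∏ e ∈ F, z e)
        ≤ ∑ F ∈ H.E.powersetCard i, (j:ℝ) * ∏ e ∈ F, z e := by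
      apply Finset.sum_le_sum
      intro F hF
      exact mul_le_mul_of_nonneg_right (hcnt F hF) (hprodnn F hF)
    have c5 : (Nat.factorial i : ℝ) * ∑ F ∈ H.E.powersetCard i, (j:ℝ) * ∏ e ∈ F, z e
        = (j:ℝ) * ((Nat.factorial i : ℝ) * ∑ F ∈ H.E.powersetCard i, ∏ e ∈ F, z e) := by
      rw [← Finset.mul_sum]; ring
    have c6 : (Nat.factorial i : ℝ) * ∑ F ∈ H.E.powersetCard i, ∏ e ∈ F, z e
        ≤ (∑ e ∈ H.E, z e)^i := upper_esymm H.E z (fun e _ => hz0 e) i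
    have c7 : (∑ e ∈ H.E, z e)^i ≤ K^i := by
      apply pow_le_pow_left₀ (Finset.sum_nonneg fun e _ => hz0 e) hSz
    have hfactnn : (0:ℝ) ≤ (Nat.factorial i : ℝ) := by positivity
    calc (U.card : ℝ) * ((1:ℝ)/2)^i
        = ∑ _v ∈ U, ((1:ℝ)/2)^i := c1
      _ ≤ ∑ v ∈ U, (Nat.factorial i : ℝ) *
            ∑ F ∈ (H.E.filter (fun e => v ∈ e)).powersetCard i, ∏ e ∈ F, z e := c2
      _ = (Nat.factorial i : ℝ) * ∑ F ∈ H.E.powersetCard i,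
            (((U.filter (fun v => ∀ e ∈ F, v ∈ e)).card : ℝ) * ∏ e ∈ F, z e) := c3
      _ ≤ (Nat.factorial i : ℝ) * ∑ F ∈ H.E.powersetCard i, (j:ℝ) * ∏ e ∈ F, z e := by
          apply mul_le_mul_of_nonneg_left c4 hfactnn
      _ = (j:ℝ) * ((Nat.factorial i : ℝ) * ∑ F ∈ H.E.powersetCard i, ∏ e ∈ F, z e) := c5
      _ ≤ (j:ℝ) * (∑ e ∈ H.E, z e)^i := by
          apply mul_le_mul_of_nonneg_left c6 (by positivity)
      _ ≤ (j:ℝ) * K^i := by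
          apply mul_le_mul_of_nonneg_left c7 (by positivity)
  have hUcard : (U.card : ℝ) ≤ (j:ℝ) * (2*K)^i := by
    have h2 := mul_le_mul_of_nonneg_right hfinal1 (by positivity : (0:ℝ) ≤ (2:ℝ)^i)
    calc (U.card : ℝ) = (U.card : ℝ) * (((1:ℝ)/2)^i * 2^i) := by
          rw [← mul_pow]; norm_num
      _ = ((U.card : ℝ) * ((1:ℝ)/2)^i) * 2^i := by ring
      _ ≤ ((j:ℝ) * K^i) * 2^i := h2
      _ = (j:ℝ) * (2*K)^i := by rw [mul_pow]; ring
  -- greedy cover of U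
  have hUcov : ∀ v ∈ U, (1:ℝ) ≤ ∑ e ∈ H.E, if v ∈ e then y e else 0 :=
    fun v hv => hycov v (hUsub hv)
  obtain ⟨Fg, hFgE, hFgcov, hFgbd⟩ :=
    greedy_cover H.E y K (fun e _ => hy0 e) hSle U.card U le_rfl hUcov
  have h2K1 : (1:ℝ) ≤ (j:ℝ) * (2*K)^i := by
    have ha : (1:ℝ) ≤ (2*K)^i := one_le_pow₀ (by linarith)
    nlinarith [ha, hj1]
  have hlogU : Real.log U.card ≤ Real.log ((j:ℝ) * (2*K)^i) := by
    rcases Nat.eq_zero_or_pos U.card with h0 | hpos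
    · rw [h0]
      simp only [Nat.cast_zero, Real.log_zero]
      exact Real.log_nonneg h2K1
    · exact Real.log_le_log (by exact_mod_cast hpos) hUcard
  set F : Finset (Finset α) := Fbig ∪ Fg with hFdef
  have hFsub : F ⊆ H.E := Finset.union_subset hFbigE hFgE
  have hVcov : H.V ⊆ F.biUnion id := by
    intro v hv
    by_cases hb : v ∈ Fbig.biUnion id
    · obtain ⟨e, he, hve⟩ := Finset.mem_biUnion.mp hb
      exact Finset.mem_biUnion.mpr ⟨e, Finset.mem_union_left _ he, hve⟩
    · obtain ⟨e, he, hve⟩ := hFgcov v (Finset.mem_sdiff.mpr ⟨hv, hb⟩)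
      exact Finset.mem_biUnion.mpr ⟨e, Finset.mem_union_right _ he, hve⟩
  have hintle : H.intCover H.V ≤ F.card := by
    apply Nat.sInf_le
    exact ⟨F, hFsub, hVcov, rfl⟩
  -- numeric conclusion
  set L : ℝ := Real.log (2*k*(j:ℝ)) with hLdef
  have h2kj2 : (2:ℝ) ≤ 2*k*(j:ℝ) := by nlinarith
  have hLlog2 : Real.log 2 ≤ L := Real.log_le_log two_pos h2kj2
  have hlogj : Real.log (j:ℝ) ≤ L := by
    apply Real.log_le_log (by linarith)
    nlinarith
  have hlog2k : Real.log (2*k) ≤ L := by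
    apply Real.log_le_log (by linarith)
    nlinarith
  have hlog2K : Real.log (2*K) ≤ 2*L := by
    have ha : 2*K ≤ (2*k)*(2*k) := by simp only [hKdef]; nlinarith
    have hb : Real.log (2*K) ≤ Real.log ((2*k)*(2*k)) :=
      Real.log_le_log (by linarith) ha
    rw [Real.log_mul (show (2*k:ℝ) ≠ 0 by linarith) (show (2*k:ℝ) ≠ 0 by linarith)] at hb
    linarith
  have hlogjnn : (0:ℝ) ≤ Real.log (j:ℝ) := Real.log_nonneg hj1
  have hlog2Knn : (0:ℝ) ≤ Real.log (2*K) := Real.log_nonneg (by linarith)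
  have hL2pos : (0:ℝ) < Real.log 2 := Real.log_pos one_lt_two
  have hLpos : (0:ℝ) < L := lt_of_lt_of_le hL2pos hLlog2
  have hexpand : Real.log ((j:ℝ) * (2*K)^i) = Real.log (j:ℝ) + i * Real.log (2*K) := by
    rw [Real.log_mul (by linarith) (by positivity), Real.log_pow]
  have hb1 : 2*K*(i:ℝ) ≤ 4*k*(i:ℝ) := by nlinarith
  have hb2 : K * Real.log ((j:ℝ) * (2*K)^i) ≤ 2*k*L + 4*k*(i:ℝ)*L := by
    rw [hexpand]
    have hinner : Real.log (j:ℝ) + (i:ℝ) * Real.log (2*K) ≤ L + (i:ℝ)*(2*L) := by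
      have := mul_le_mul_of_nonneg_left hlog2K (le_of_lt hipos)
      linarith
    have hinnernn : (0:ℝ) ≤ Real.log (j:ℝ) + (i:ℝ) * Real.log (2*K) := by positivity
    have := mul_le_mul hK2k hinner hinnernn (by linarith : (0:ℝ) ≤ 2*k)
    nlinarith
  have hcardsum : (F.card : ℝ) ≤ (Fbig.card : ℝ) + (Fg.card : ℝ) := by
    have := Finset.card_union_le Fbig Fg
    exact_mod_cast this
  have hKlog : K * Real.log U.card ≤ K * Real.log ((j:ℝ) * (2*K)^i) :=
    mul_le_mul_of_nonneg_left hlogU (by linarith)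
  have hmain : (H.intCover H.V : ℝ) ≤ 5*(k*(i:ℝ)) + 6*(k*(i:ℝ))*L := by
    have hc0 : (H.intCover H.V : ℝ) ≤ (F.card : ℝ) := by exact_mod_cast hintle
    have hkLi : 2*k*L ≤ 2*k*(i:ℝ)*L := by
      nlinarith [mul_le_mul_of_nonneg_left hi1
        (mul_nonneg (by linarith : (0:ℝ) ≤ 2*k) hLpos.le)]
    have hki1 : (1:ℝ) ≤ k*(i:ℝ) := by nlinarith
    linarith [hc0, hcardsum, hFbigcard, hKlog, hb1, hb2, hFgbd, hkLi, hki1]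
  have hnum : (5 + 6*L) * Real.log 2 ≤ 10 * L := by
    nlinarith [Real.log_two_lt_d9, Real.log_two_gt_d9, hLlog2]
  have hlast : 5*(k*(i:ℝ)) + 6*(k*(i:ℝ))*L ≤ 10*k*(i:ℝ)*(L/Real.log 2) := by
    have h1 : (5 + 6*L) ≤ 10*L/Real.log 2 := (le_div_iff₀ hL2pos).mpr hnum
    calc 5*(k*(i:ℝ))+6*(k*(i:ℝ))*L = (k*(i:ℝ))*(5+6*L) := by ring
      _ ≤ (k*(i:ℝ))*(10*L/Real.log 2) := by
          exact mul_le_mul_of_nonneg_left h1 (mul_nonneg (by linarith : (0:ℝ) ≤ k) hipos.le)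
      _ = 10*k*(i:ℝ)*(L/Real.log 2) := by ring
  have hgoal : Real.logb 2 (2*k*(j:ℝ)) = L / Real.log 2 := by
    simp [Real.logb, hLdef]
  rw [hgoal]
  exact hmain.trans hlast
end
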